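/- Let C > 1, α ∈ (0, 1/4), γ > C(20α)^{1/5} and r > 5/γ. Suppose H is a random subgraph of K_{n,n} that is (Cr/n)-spread. Then H fails to be (α, γr/n)-sparse with probability less than n^{−14}. -/

import Mathlib

open MeasureTheory ProbabilityTheory

noncomputable section

namespace Paper

-- (k+1)^k ≤ 3 k^k  in ℝ
lemma aux_succ_pow (k : ℕ) : ((k : ℝ) + 1) ^ k ≤ 3 * (k : ℝ) ^ k := by
  rcases Nat.eq_zero_or_pos k with hk | hk
  · subst hk; norm_num
  · have hK : (0 : ℝ) < k := by exact_mod_cast hk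
    have h1 : ((k : ℝ) + 1) = (k : ℝ) * (1 + 1 / k) := by field_simp
    have h2 : (1 + 1 / (k : ℝ)) ^ k ≤ Real.exp (1 / k) ^ k := by
      apply pow_le_pow_left₀ (by positivity)
      have := Real.add_one_le_exp (1 / (k : ℝ))
      linarith
    have h3 : Real.exp (1 / (k : ℝ)) ^ k = Real.exp 1 := by
      rw [← Real.exp_nat_mul]
      congr 1
      field_simp
    have h4 : Real.exp 1 ≤ 3 := by
      have := Real.exp_one_lt_d9
      linarith
    calc ((k : ℝ) + 1) ^ k = (k : ℝ) ^ k * (1 + 1 / k) ^ k := by rw [h1, mul_pow]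
      _ ≤ (k : ℝ) ^ k * 3 := by
          apply mul_le_mul_of_nonneg_left _ (by positivity)
          rw [h3] at h2; linarith
      _ = 3 * (k : ℝ) ^ k := by ring

-- k^k ≤ 3^k k!
lemma aux_pow_le_factorial (k : ℕ) : (k : ℝ) ^ k ≤ 3 ^ k * (Nat.factorial k : ℝ) := by
  induction k with
  | zero => norm_num
  | succ k ih =>
      have h1 := aux_succ_pow k
      have hnn : (0 : ℝ) ≤ (k : ℝ) + 1 := by positivity
      calc ((k + 1 : ℕ) : ℝ) ^ (k + 1) = ((k : ℝ) + 1) * ((k : ℝ) + 1) ^ k := by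
            push_cast; ring
        _ ≤ ((k : ℝ) + 1) * (3 * (k : ℝ) ^ k) := by
            exact mul_le_mul_of_nonneg_left h1 hnn
        _ ≤ ((k : ℝ) + 1) * (3 * (3 ^ k * (Nat.factorial k : ℝ))) := by
            apply mul_le_mul_of_nonneg_left _ hnn
            apply mul_le_mul_of_nonneg_left ih (by norm_num)
        _ = 3 ^ (k + 1) * ((k + 1) * Nat.factorial k : ℕ) := by push_cast; ring
        _ = 3 ^ (k + 1) * (Nat.factorial (k + 1) : ℝ) := by
            rw [Nat.factorial_succ]

-- choose bound: (choose N k : ℝ) * k^k ≤ (3N)^k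
lemma aux_choose_le (N k : ℕ) : (N.choose k : ℝ) * (k : ℝ) ^ k ≤ (3 * (N : ℝ)) ^ k := by
  have h1 : (Nat.factorial k * N.choose k : ℕ) ≤ N ^ k := by
    rw [← Nat.descFactorial_eq_factorial_mul_choose]
    exact Nat.descFactorial_le_pow N k
  have h1' : (Nat.factorial k : ℝ) * (N.choose k : ℝ) ≤ (N : ℝ) ^ k := by
    exact_mod_cast h1
  have h2 := aux_pow_le_factorial k
  calc (N.choose k : ℝ) * (k : ℝ) ^ k ≤ (N.choose k : ℝ) * (3 ^ k * (Nat.factorial k : ℝ)) :=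
        mul_le_mul_of_nonneg_left h2 (Nat.cast_nonneg _)
    _ = 3 ^ k * ((Nat.factorial k : ℝ) * (N.choose k : ℝ)) := by ring
    _ ≤ 3 ^ k * (N : ℝ) ^ k := mul_le_mul_of_nonneg_left h1' (by positivity)
    _ = (3 * (N : ℝ)) ^ k := by rw [mul_pow]

-- v^4 ≤ 2^v  for v ≥ 16 (ℕ)
lemma aux_pow4_le (v : ℕ) (hv : 16 ≤ v) : v ^ 4 ≤ 2 ^ v := by
  induction v with
  | zero => omega
  | succ v ih =>
      rcases Nat.lt_or_ge v 16 with h | h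
      · have : v = 15 := by omega
        subst this; norm_num
      · have h1 := ih h
        have h2 : (v + 1) ^ 4 ≤ 2 * v ^ 4 := by
          nlinarith [Nat.mul_le_mul_right (v ^ 3) h, Nat.mul_le_mul_right (v ^ 2) h,
            Nat.mul_le_mul_right v h, h]
        calc (v + 1) ^ 4 ≤ 2 * v ^ 4 := h2
          _ ≤ 2 * 2 ^ v := by omega
          _ = 2 ^ (v + 1) := by ring


def pairsIn (n : ℕ) (V : Finset (Fin n ⊕ Fin n)) : Finset (Fin n × Fin n) :=
  Finset.univ.filter fun e => Sum.inl e.1 ∈ V ∧ Sum.inr e.2 ∈ V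

lemma pairsIn_card (n : ℕ) (V : Finset (Fin n ⊕ Fin n)) :
    (4 : ℝ) * (pairsIn n V).card ≤ ((V.card : ℝ)) ^ 2 := by
  classical
  set L : Finset (Fin n) := Finset.univ.filter (fun u => Sum.inl u ∈ V) with hL
  set R : Finset (Fin n) := Finset.univ.filter (fun u => Sum.inr u ∈ V) with hR
  have hprod : pairsIn n V = L ×ˢ R := by
    ext ⟨a, b⟩
    simp [pairsIn, hL, hR, Finset.mem_product]
  have hcardp : (pairsIn n V).card = L.card * R.card := by
    rw [hprod, Finset.card_product]
  have hsum : L.card + R.card = V.card := by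
    have hunion : L.map ⟨Sum.inl, Sum.inl_injective⟩ ∪ R.map ⟨Sum.inr, Sum.inr_injective⟩ = V := by
      ext x
      cases x <;> simp [hL, hR]
    have hdisj : Disjoint (L.map ⟨Sum.inl, Sum.inl_injective⟩)
        (R.map ⟨Sum.inr, Sum.inr_injective⟩) := by
      simp only [Finset.disjoint_left, Finset.mem_map]
      rintro x ⟨a, _, rfl⟩ ⟨b, _, h⟩
      simp at h
    rw [← hunion, Finset.card_union_of_disjoint hdisj, Finset.card_map, Finset.card_map]
  have : ((L.card : ℝ) + R.card) = V.card := by exact_mod_cast hsum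
  rw [hcardp]
  push_cast
  nlinarith [sq_nonneg ((L.card : ℝ) - R.card)]

-- nat exponent inequality: 2^(4j) * 2^(j+1) ≤ 14^j * 4^(3*(j-5))  for j ≥ 21
lemma aux_exp_ineq (j : ℕ) (hj : 21 ≤ j) :
    (2 : ℕ) ^ (4 * j) * 2 ^ (j + 1) ≤ 14 ^ j * 4 ^ (3 * (j - 5)) := by
  have h1 : (2 : ℕ) ^ (4 * j) * 2 ^ (j + 1) = 2 ^ (5 * j + 1) := by
    rw [← pow_add]; ring_nf
  have h2 : (14 : ℕ) ^ j ≥ 2 ^ (3 * j) := by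
    calc (14 : ℕ) ^ j ≥ 8 ^ j := Nat.pow_le_pow_left (by norm_num) j
      _ = 2 ^ (3 * j) := by rw [pow_mul]; norm_num
  have h3 : (4 : ℕ) ^ (3 * (j - 5)) = 2 ^ (6 * (j - 5)) := by
    rw [show (4:ℕ) = 2^2 by norm_num, ← pow_mul]; ring_nf
  have h4 : (2:ℕ) ^ (5 * j + 1) ≤ 2 ^ (3 * j) * 2 ^ (6 * (j - 5)) := by
    rw [← pow_add]
    exact Nat.pow_le_pow_right (by norm_num) (by omega)
  calc (2 : ℕ) ^ (4 * j) * 2 ^ (j + 1) = 2 ^ (5 * j + 1) := h1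
    _ ≤ 2 ^ (3 * j) * 2 ^ (6 * (j - 5)) := h4
    _ ≤ 14 ^ j * 4 ^ (3 * (j - 5)) := by
        rw [h3]; exact Nat.mul_le_mul_right _ h2


lemma perj (C α γ : ℝ) (n j : ℕ) (hn : 0 < n) (hC : 1 < C) (hα0 : 0 < α) (hα4 : α < 1/4)
    (hγ0 : 0 < γ) (hγ5 : 20 * C ^ 5 * α < γ ^ 5) (hj21 : 21 ≤ j) (hjα : (j : ℝ) ≤ α * n) :
    ((n + n).choose j : ℝ) * ((3 * C * j) / (4 * γ * n)) ^ (5 * j) ≤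
      ((n : ℝ) ^ (15 : ℕ))⁻¹ * (1 / 2) ^ (j + 1) := by
  have hN : (0 : ℝ) < n := by exact_mod_cast hn
  have hJ : (21 : ℝ) ≤ j := by exact_mod_cast hj21
  have hJ0 : (0 : ℝ) < j := by linarith
  have hC0 : (0 : ℝ) < C := by linarith
  set J : ℝ := (j : ℝ) with hJdef
  set Nr : ℝ := (n : ℝ) with hNdef
  have key : 20 * C ^ 5 * J ≤ γ ^ 5 * Nr := by
    have k1 : 20 * C ^ 5 * J ≤ 20 * C ^ 5 * (α * Nr) := by
      apply mul_le_mul_of_nonneg_left hjα (by positivity)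
    have k2 : 20 * C ^ 5 * α * Nr ≤ γ ^ 5 * Nr :=
      mul_le_mul_of_nonneg_right hγ5.le hN.le
    nlinarith
  -- step a
  have ha : ((n + n).choose j : ℝ) ≤ (6 * Nr / J) ^ j := by
    have h1 := aux_choose_le (n + n) j
    have h2 : (3 * ((n + n : ℕ) : ℝ)) = 6 * Nr := by push_cast; ring
    rw [h2] at h1
    rw [div_pow, le_div_iff₀ (by positivity)]
    exact h1
  -- step d
  have hd : (6 * Nr / J) * ((3 * C * J) / (4 * γ * Nr)) ^ 5 ≤ (1 / 14) * (J / Nr) ^ 3 := by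
    have e1 : (6 * Nr / J) * ((3 * C * J) / (4 * γ * Nr)) ^ 5
        = (1458 * (C ^ 5 * J ^ 4)) / (1024 * (γ ^ 5 * Nr ^ 4)) := by
      field_simp
      ring
    have e2 : (1 / 14 : ℝ) * (J / Nr) ^ 3 = J ^ 3 / (14 * Nr ^ 3) := by
      field_simp
    rw [e1, e2, div_le_div_iff₀ (by positivity) (by positivity)]
    have key2 : 20 * C ^ 5 * J * (J ^ 3 * Nr ^ 3) ≤ γ ^ 5 * Nr * (J ^ 3 * Nr ^ 3) :=
      mul_le_mul_of_nonneg_right key (by positivity)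
    nlinarith [key2, mul_pos (mul_pos (pow_pos hC0 5) (pow_pos hJ0 4)) (pow_pos hN 3)]
  -- combine a, d
  have hbase0 : (0 : ℝ) ≤ (6 * Nr / J) * ((3 * C * J) / (4 * γ * Nr)) ^ 5 := by positivity
  have hcomb : ((n + n).choose j : ℝ) * ((3 * C * J) / (4 * γ * Nr)) ^ (5 * j)
      ≤ ((1 / 14) * (J / Nr) ^ 3) ^ j := by
    calc ((n + n).choose j : ℝ) * ((3 * C * J) / (4 * γ * Nr)) ^ (5 * j)
        = ((n + n).choose j : ℝ) * (((3 * C * J) / (4 * γ * Nr)) ^ 5) ^ j := by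
          rw [← pow_mul]
      _ ≤ (6 * Nr / J) ^ j * (((3 * C * J) / (4 * γ * Nr)) ^ 5) ^ j := by
          apply mul_le_mul_of_nonneg_right ha (by positivity)
      _ = ((6 * Nr / J) * ((3 * C * J) / (4 * γ * Nr)) ^ 5) ^ j := by rw [mul_pow]
      _ ≤ ((1 / 14) * (J / Nr) ^ 3) ^ j := pow_le_pow_left₀ hbase0 hd j
  -- step e
  have hJN : J / Nr ≤ 1 / 4 := by
    rw [div_le_div_iff₀ hN (by norm_num)]
    nlinarith
  have hJ15 : J ^ 15 ≤ (2 : ℝ) ^ (4 * j) := by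
    have n1 : j ^ 15 ≤ j ^ 16 := Nat.pow_le_pow_right (by omega) (by omega)
    have n2 : j ^ 16 = (j ^ 4) ^ 4 := by ring
    have n3 : (j ^ 4) ^ 4 ≤ (2 ^ j) ^ 4 := Nat.pow_le_pow_left (aux_pow4_le j (by omega)) 4
    have n4 : ((2 : ℕ) ^ j) ^ 4 = 2 ^ (4 * j) := by rw [← pow_mul]; ring_nf
    have h5 : j ^ 15 ≤ 2 ^ (4 * j) := by omega
    rw [hJdef]
    exact_mod_cast h5
  have hsplit : 3 * j = 15 + 3 * (j - 5) := by omega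
  have he : ((1 / 14) * (J / Nr) ^ 3) ^ j ≤ (Nr ^ (15 : ℕ))⁻¹ * (1 / 2) ^ (j + 1) := by
    have e1 : ((1 / 14 : ℝ) * (J / Nr) ^ 3) ^ j
        = (1 / 14) ^ j * ((J / Nr) ^ 15 * (J / Nr) ^ (3 * (j - 5))) := by
      rw [mul_pow, ← pow_mul, hsplit, pow_add]
    have e2 : (J / Nr) ^ (3 * (j - 5)) ≤ (1 / 4 : ℝ) ^ (3 * (j - 5)) :=
      pow_le_pow_left₀ (by positivity) hJN _
    have e3 : (J / Nr) ^ 15 ≤ (2 : ℝ) ^ (4 * j) / Nr ^ 15 := by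
      rw [div_pow, div_le_div_iff₀ (by positivity) (by positivity)]
      exact mul_le_mul_of_nonneg_right hJ15 (by positivity)
    have e4 : ((1 / 14 : ℝ)) ^ j * ((2 : ℝ) ^ (4 * j) * (1 / 4) ^ (3 * (j - 5)))
        ≤ (1 / 2) ^ (j + 1) := by
      have nat1 : ((2 : ℝ)) ^ (4 * j) * 2 ^ (j + 1) ≤ 14 ^ j * 4 ^ (3 * (j - 5)) := by
        exact_mod_cast aux_exp_ineq j hj21
      have hpos : (0 : ℝ) < 14 ^ j * 4 ^ (3 * (j - 5)) * 2 ^ (j + 1) := by positivity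
      rw [show ((1 / 14 : ℝ)) ^ j * ((2 : ℝ) ^ (4 * j) * (1 / 4) ^ (3 * (j - 5)))
            = (2 ^ (4 * j) * 2 ^ (j + 1)) / (14 ^ j * 4 ^ (3 * (j - 5)) * 2 ^ (j + 1))
          from by simp only [one_div, inv_pow]; field_simp; try ring]
      rw [show ((1 : ℝ) / 2) ^ (j + 1)
            = (14 ^ j * 4 ^ (3 * (j - 5))) / (14 ^ j * 4 ^ (3 * (j - 5)) * 2 ^ (j + 1))
          from by simp only [one_div, inv_pow]; field_simp; try ring]
      exact (div_le_div_iff_of_pos_right hpos).mpr nat1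
    calc ((1 / 14 : ℝ) * (J / Nr) ^ 3) ^ j
        = (1 / 14) ^ j * ((J / Nr) ^ 15 * (J / Nr) ^ (3 * (j - 5))) := e1
      _ ≤ (1 / 14) ^ j * (((2 : ℝ) ^ (4 * j) / Nr ^ 15) * (1 / 4) ^ (3 * (j - 5))) := by
          apply mul_le_mul_of_nonneg_left _ (by positivity)
          exact mul_le_mul e3 e2 (by positivity) (by positivity)
      _ = (Nr ^ (15 : ℕ))⁻¹ * ((1 / 14) ^ j * ((2 : ℝ) ^ (4 * j) * (1 / 4) ^ (3 * (j - 5)))) := by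
          field_simp
          try ring
      _ ≤ (Nr ^ (15 : ℕ))⁻¹ * (1 / 2) ^ (j + 1) := by
          apply mul_le_mul_of_nonneg_left e4 (by positivity)
  calc ((n + n).choose j : ℝ) * ((3 * C * J) / (4 * γ * Nr)) ^ (5 * j)
      ≤ ((1 / 14) * (J / Nr) ^ 3) ^ j := hcomb
    _ ≤ (Nr ^ (15 : ℕ))⁻¹ * (1 / 2) ^ (j + 1) := he




set_option maxHeartbeats 1000000 in
lemma perV (C α γ r : ℝ) (n : ℕ) (hn : 0 < n) (hC : 1 < C) (hα0 : 0 < α) (hα4 : α < 1/4)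
    (hγ0 : 0 < γ) (hr0 : 0 < r) (hγ5 : 20 * C ^ 5 * α < γ ^ 5) (hγr : 5 < γ * r)
    (V : Finset (Fin n ⊕ Fin n)) (hV : (V.card : ℝ) ≤ α * n) :
    ((pairsIn n V).card.choose (⌊(V.card : ℝ) * γ * r⌋₊ + 1) : ℝ)
        * (C * r / n) ^ (⌊(V.card : ℝ) * γ * r⌋₊ + 1)
      ≤ if 21 ≤ V.card ∧ (V.card : ℝ) ≤ α * n
          then ((3 * C * V.card) / (4 * γ * n)) ^ (5 * V.card) else 0 := by
  have hN : (0 : ℝ) < n := by exact_mod_cast hn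
  have hC0 : (0 : ℝ) < C := by linarith
  set v : ℕ := V.card with hv
  set k : ℕ := ⌊(v : ℝ) * γ * r⌋₊ + 1 with hk
  set m : ℕ := (pairsIn n V).card with hm
  have h4m : (4 : ℝ) * m ≤ (v : ℝ) ^ 2 := pairsIn_card n V
  clear_value m
  clear_value k
  clear_value v
  have hq0 : (0 : ℝ) < C * r / n := by positivity
  rcases Nat.lt_or_ge m k with hmk | hkm
  · -- choose = 0
    rw [Nat.choose_eq_zero_of_lt hmk]
    simp only [Nat.cast_zero, zero_mul]
    split <;> positivity
  · -- main case
    have hkreal : ((v : ℝ) * γ * r) < k := by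
      have := Nat.lt_floor_add_one ((v : ℝ) * γ * r)
      push_cast [hk]
      push_cast at this
      linarith
    have hk5 : 5 * v + 1 ≤ k := by
      have h5v : (5 * v : ℕ) ≤ ⌊(v : ℝ) * γ * r⌋₊ := by
        apply Nat.le_floor
        push_cast
        nlinarith [Nat.cast_nonneg (α := ℝ) v]
      omega
    have hv21 : 21 ≤ v := by
      by_contra h
      push_neg at h
      have hv20 : (v : ℝ) ≤ 20 := by exact_mod_cast Nat.lt_succ_iff.mp h
      have hkm' : (k : ℝ) ≤ m := by exact_mod_cast hkm
      have hk5' : 5 * (v : ℝ) + 1 ≤ k := by exact_mod_cast hk5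
      nlinarith [Nat.cast_nonneg (α := ℝ) v]
    have hvpos : (0 : ℝ) < v := by
      have : (21 : ℝ) ≤ v := by exact_mod_cast hv21
      linarith
    set y : ℝ := (3 * C * v) / (4 * γ * n) with hy
    have hy0 : 0 ≤ y := by positivity
    have hy1 : y ≤ 1 := by
      have hYnum : 3 * C * α < 4 * γ := by
        have p1 : (3 * C * α) ^ 5 = 243 * (C ^ 5 * α ^ 4) * α := by ring
        have p2 : α ^ 4 ≤ 1 := pow_le_one₀ hα0.le (by linarith)
        have p3 : (3 * C * α) ^ 5 ≤ 243 * (C ^ 5 * α) := by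
          rw [p1]
          nlinarith [mul_le_mul_of_nonneg_right p2 (le_of_lt (mul_pos (pow_pos hC0 5) hα0))]
        have p4 : 243 * (C ^ 5 * α) < 1024 * γ ^ 5 := by nlinarith [pow_pos hC0 5]
        have p5 : (3 * C * α) ^ 5 < (4 * γ) ^ 5 := by
          calc (3 * C * α) ^ 5 ≤ 243 * (C ^ 5 * α) := p3
            _ < 1024 * γ ^ 5 := p4
            _ = (4 * γ) ^ 5 := by ring
        exact lt_of_pow_lt_pow_left₀ 5 (by positivity) p5
      have : y ≤ 3 * C * α / (4 * γ) := by
        rw [hy, div_le_div_iff₀ (by positivity) (by positivity)]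
        nlinarith [mul_le_mul_of_nonneg_left hV (le_of_lt (by positivity : (0:ℝ) < 3 * C))]
      have h2 : 3 * C * α / (4 * γ) ≤ 1 := by
        rw [div_le_one (by positivity)]
        linarith
      linarith
    -- choose bound
    have hc : ((m.choose k : ℝ)) ≤ (3 * (m : ℝ) / k) ^ k := by
      have h1 := aux_choose_le m k
      have hkpos : (0 : ℝ) < (k : ℝ) := by
        have : (0 : ℕ) < k := by omega
        exact_mod_cast this
      rw [div_pow, le_div_iff₀ (by positivity)]
      exact h1
    have step1 : ((m.choose k : ℝ)) * (C * r / n) ^ k ≤ (3 * m * (C * r / n) / k) ^ k := by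
      calc ((m.choose k : ℝ)) * (C * r / n) ^ k ≤ (3 * (m : ℝ) / k) ^ k * (C * r / n) ^ k :=
            mul_le_mul_of_nonneg_right hc (by positivity)
        _ = (3 * m * (C * r / n) / k) ^ k := by rw [← mul_pow]; congr 1; ring
    have hnum0 : (0 : ℝ) ≤ 3 * (m : ℝ) * (C * r / n) :=
      mul_nonneg (mul_nonneg (by norm_num) (Nat.cast_nonneg m)) hq0.le
    have step2 : 3 * (m : ℝ) * (C * r / n) / k ≤ y := by
      have hvγr : (0 : ℝ) < (v : ℝ) * γ * r := mul_pos (mul_pos hvpos hγ0) hr0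
      have s1 : 3 * (m : ℝ) * (C * r / n) / k ≤ 3 * (m : ℝ) * (C * r / n) / ((v : ℝ) * γ * r) :=
        div_le_div_of_nonneg_left hnum0 hvγr hkreal.le
      have s2 : 3 * (m : ℝ) * (C * r / n) / ((v : ℝ) * γ * r)
          ≤ 3 * ((v : ℝ) ^ 2 / 4) * (C * r / n) / ((v : ℝ) * γ * r) := by
        apply (div_le_div_iff_of_pos_right hvγr).mpr
        have hx : (m : ℝ) * (C * r / n) ≤ ((v : ℝ) ^ 2 / 4) * (C * r / n) :=
          mul_le_mul_of_nonneg_right (by linarith) hq0.le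
        nlinarith [hx]
      have s3 : 3 * ((v : ℝ) ^ 2 / 4) * (C * r / n) / ((v : ℝ) * γ * r) = y := by
        rw [hy]
        field_simp
      rw [← s3]
      exact le_trans s1 s2
    rw [if_pos ⟨hv21, hV⟩]
    calc ((m.choose k : ℝ)) * (C * r / n) ^ k ≤ (3 * m * (C * r / n) / k) ^ k := step1
      _ ≤ y ^ k := pow_le_pow_left₀ (div_nonneg hnum0 (Nat.cast_nonneg k)) step2 k
      _ ≤ y ^ (5 * v) := pow_le_pow_of_le_one hy0 hy1 (by omega)




lemma geom_aux (M : ℕ) : ∑ m ∈ Finset.range M, ((1 : ℝ) / 2) ^ (m + 1) = 1 - (1 / 2) ^ M := by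
  induction M with
  | zero => simp
  | succ M ih => rw [Finset.sum_range_succ, ih]; ring

lemma real_sum (C α γ r : ℝ) (n : ℕ) (hn : 0 < n) (hC : 1 < C) (hα0 : 0 < α) (hα4 : α < 1/4)
    (hγ0 : 0 < γ) (hr0 : 0 < r) (hγ5 : 20 * C ^ 5 * α < γ ^ 5) (hγr : 5 < γ * r) :
    ∑ V ∈ Finset.univ.filter (fun V : Finset (Fin n ⊕ Fin n) => (V.card : ℝ) ≤ α * n),
      (((pairsIn n V).card.choose (⌊(V.card : ℝ) * γ * r⌋₊ + 1) : ℝ)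
        * (C * r / n) ^ (⌊(V.card : ℝ) * γ * r⌋₊ + 1))
      < (n : ℝ) ^ (-14 : ℤ) := by
  classical
  have hN : (0 : ℝ) < n := by exact_mod_cast hn
  set h' : ℕ → ℝ := fun j => if 21 ≤ j ∧ (j : ℝ) ≤ α * n
      then ((3 * C * j) / (4 * γ * n)) ^ (5 * j) else 0 with hh'
  have hh'nonneg : ∀ j, 0 ≤ h' j := by
    intro j
    rw [hh']
    dsimp only
    split
    · positivity
    · exact le_refl _
  -- step 1: bound each summand
  have step1 : ∑ V ∈ Finset.univ.filter (fun V : Finset (Fin n ⊕ Fin n) => (V.card : ℝ) ≤ α * n),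
      (((pairsIn n V).card.choose (⌊(V.card : ℝ) * γ * r⌋₊ + 1) : ℝ)
        * (C * r / n) ^ (⌊(V.card : ℝ) * γ * r⌋₊ + 1))
      ≤ ∑ V ∈ Finset.univ.filter (fun V : Finset (Fin n ⊕ Fin n) => (V.card : ℝ) ≤ α * n),
          h' V.card := by
    apply Finset.sum_le_sum
    intro V hVmem
    rw [Finset.mem_filter] at hVmem
    exact perV C α γ r n hn hC hα0 hα4 hγ0 hr0 hγ5 hγr V hVmem.2
  -- step 2: extend to all subsets
  have step2 : ∑ V ∈ Finset.univ.filter (fun V : Finset (Fin n ⊕ Fin n) => (V.card : ℝ) ≤ α * n),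
        h' V.card
      ≤ ∑ V ∈ (Finset.univ : Finset (Fin n ⊕ Fin n)).powerset, h' V.card := by
    apply Finset.sum_le_sum_of_subset_of_nonneg
    · rw [Finset.powerset_univ]
      exact Finset.filter_subset _ _
    · intro V _ _
      exact hh'nonneg V.card
  -- step 3: group by cardinality
  have hcard : (Finset.univ : Finset (Fin n ⊕ Fin n)).card = n + n := by
    simp [Finset.card_univ]
  have step3 : ∑ V ∈ (Finset.univ : Finset (Fin n ⊕ Fin n)).powerset, h' V.card
      = ∑ j ∈ Finset.range (n + n + 1), (n + n).choose j • h' j := by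
    rw [Finset.sum_powerset_apply_card, hcard]
  -- step 4: per-j bound
  have step4 : ∑ j ∈ Finset.range (n + n + 1), (n + n).choose j • h' j
      ≤ ∑ j ∈ Finset.range (n + n + 1), ((n : ℝ) ^ (15 : ℕ))⁻¹ * ((1 : ℝ) / 2) ^ (j + 1) := by
    apply Finset.sum_le_sum
    intro j _
    rw [nsmul_eq_mul, hh']
    dsimp only
    split
    · rename_i hcond
      exact perj C α γ n j hn hC hα0 hα4 hγ0 hγ5 hcond.1 hcond.2
    · rw [mul_zero]
      positivity
  -- step 5: geometric sum
  have step5 : ∑ j ∈ Finset.range (n + n + 1), ((n : ℝ) ^ (15 : ℕ))⁻¹ * ((1 : ℝ) / 2) ^ (j + 1)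
      < ((n : ℝ) ^ (15 : ℕ))⁻¹ := by
    rw [← Finset.mul_sum, geom_aux]
    have h1 : (0 : ℝ) < (1 / 2 : ℝ) ^ (n + n + 1) := by positivity
    have h2 : (0 : ℝ) < ((n : ℝ) ^ (15 : ℕ))⁻¹ := by positivity
    nlinarith
  have step6 : ((n : ℝ) ^ (15 : ℕ))⁻¹ ≤ (n : ℝ) ^ (-14 : ℤ) := by
    have h1 : (n : ℝ) ^ (-14 : ℤ) = ((n : ℝ) ^ (14 : ℕ))⁻¹ := by
      rw [zpow_neg, show ((14 : ℤ)) = ((14 : ℕ) : ℤ) by norm_num, zpow_natCast]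
    rw [h1]
    apply inv_anti₀ (by positivity)
    apply pow_le_pow_right₀
    · exact_mod_cast hn
    · norm_num
  calc _ ≤ _ := step1
    _ ≤ _ := step2
    _ = _ := step3
    _ ≤ _ := step4
    _ < ((n : ℝ) ^ (15 : ℕ))⁻¹ := step5
    _ ≤ (n : ℝ) ^ (-14 : ℤ) := step6


/-- A factorisation of (the edge set of) a graph into `m` parts:
pairwise disjoint subsets of `H` covering `H`. -/
def IsFactorisation {ι : Type*} [DecidableEq ι] {m : ℕ} (H : Finset ι)
    (F : Fin m → Finset ι) : Prop :=
  (∀ c, F c ⊆ H) ∧ (∀ c c', c ≠ c' → Disjoint (F c) (F c')) ∧ ∀ e ∈ H, ∃ c, e ∈ F c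

/-- Degree of a left vertex in a bipartite graph `H ⊆ K_{n,n}`. -/
def leftDeg (n : ℕ) (H : Finset (Fin n × Fin n)) (u : Fin n) : ℕ :=
  (H.filter fun e => e.1 = u).card

/-- Degree of a right vertex in a bipartite graph `H ⊆ K_{n,n}`. -/
def rightDeg (n : ℕ) (H : Finset (Fin n × Fin n)) (v : Fin n) : ℕ :=
  (H.filter fun e => e.2 = v).card

/-- `H ⊆ K_{n,n}` is `r`-regular: every vertex of `U₁ ∪ U₂` lies in exactly `r` edges. -/
def IsRegular (n r : ℕ) (H : Finset (Fin n × Fin n)) : Prop :=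
  (∀ u, leftDeg n H u = r) ∧ ∀ v, rightDeg n H v = r

/-- `H ⊆ K_{n,n}` has all vertex degrees in the interval `[lo, hi]`. -/
def IsRegularInterval (n : ℕ) (lo hi : ℝ) (H : Finset (Fin n × Fin n)) : Prop :=
  (∀ u, lo ≤ (leftDeg n H u : ℝ) ∧ (leftDeg n H u : ℝ) ≤ hi) ∧
    ∀ v, lo ≤ (rightDeg n H v : ℝ) ∧ (rightDeg n H v : ℝ) ≤ hi

/-- The edges of `H` with first endpoint in `V₁` and second endpoint in `V₂`. -/
def edgesBetween (n : ℕ) (H : Finset (Fin n × Fin n)) (V₁ V₂ : Finset (Fin n)) :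
    Finset (Fin n × Fin n) :=
  H.filter fun e => e.1 ∈ V₁ ∧ e.2 ∈ V₂

/-- `H ⊆ K_{n,n}` is `(δ,p)`-uniform. -/
def IsUniform (n : ℕ) (δ p : ℝ) (H : Finset (Fin n × Fin n)) : Prop :=
  ∀ V₁ V₂ : Finset (Fin n), δ * n ≤ V₁.card → δ * n ≤ V₂.card →
    (1 - δ) * p * V₁.card * V₂.card ≤ ((edgesBetween n H V₁ V₂).card : ℝ) ∧
      ((edgesBetween n H V₁ V₂).card : ℝ) ≤ (1 + δ) * p * V₁.card * V₂.card

/-- `H ⊆ K_{n,n}` is `(δ,δ',p)`-dense. -/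
def IsDenseB (n : ℕ) (δ δ' p : ℝ) (H : Finset (Fin n × Fin n)) : Prop :=
  ∀ V₁ V₂ : Finset (Fin n), δ' * n ≤ V₁.card → δ' * n ≤ V₂.card →
    (1 - δ) * p * V₁.card * V₂.card ≤ ((edgesBetween n H V₁ V₂).card : ℝ)

/-- The edges of `H` with both endpoints in a set `V ⊆ U₁ ∪ U₂` of vertices. -/
def edgesWithin (n : ℕ) (H : Finset (Fin n × Fin n)) (V : Finset (Fin n ⊕ Fin n)) :
    Finset (Fin n × Fin n) :=
  H.filter fun e => Sum.inl e.1 ∈ V ∧ Sum.inr e.2 ∈ V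

/-- `H ⊆ K_{n,n}` is `(α,β)`-sparse. -/
def IsSparse (n : ℕ) (α β : ℝ) (H : Finset (Fin n × Fin n)) : Prop :=
  ∀ V : Finset (Fin n ⊕ Fin n), (V.card : ℝ) ≤ α * n →
    ((edgesWithin n H V).card : ℝ) ≤ V.card * β * n

/-- `H ⊆ K_{n,n}` is `(δ,δ',η,p)`-quasirandom. -/
def IsQuasirandom (n : ℕ) (δ δ' η p : ℝ) (H : Finset (Fin n × Fin n)) : Prop :=
  IsRegularInterval n ((1 - δ) * p * n) ((1 + δ) * p * n) H ∧
    IsSparse n (3 * δ') (η * p) H ∧ IsDenseB n δ δ' p H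

/-- A perfect matching of the vertex set `U₁ ∪ U₂` of `K_{n,n}`. -/
def IsPerfectMatching (n : ℕ) (M : Finset (Fin n × Fin n)) : Prop :=
  IsRegular n 1 M

/-- A 1-factorisation (optimal edge-colouring) of `H ⊆ K_{n,n}`:
a partition of `E(H)` into perfect matchings. -/
def IsOneFactorisation (n : ℕ) {r : ℕ} (H : Finset (Fin n × Fin n))
    (M : Fin r → Finset (Fin n × Fin n)) : Prop :=
  IsFactorisation H M ∧ ∀ c, IsPerfectMatching n (M c)

theorem stmt_13 (C α γ r : ℝ) (hC : 1 < C) (hα : α ∈ Set.Ioo (0 : ℝ) (1 / 4))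
    (hγ : C * (20 * α) ^ ((1 : ℝ) / 5) < γ) (hr : 5 / γ < r)
    (n : ℕ) (hn : 0 < n)
    (Ω : Type*) [MeasurableSpace Ω] (μ : Measure Ω) [IsProbabilityMeasure μ]
    (H : Ω → Finset (Fin n × Fin n))
    (hspread : ∀ S : Finset (Fin n × Fin n),
      μ {ω | S ⊆ H ω} ≤ ENNReal.ofReal ((C * r / n) ^ S.card)) :
    μ {ω | ¬ IsSparse n α (γ * r / n) (H ω)} < ENNReal.ofReal ((n : ℝ) ^ (-14 : ℤ)) := by
  classical
  obtain ⟨hα0, hα4⟩ := hα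
  have hC0 : (0 : ℝ) < C := by linarith
  have h20 : (0 : ℝ) < 20 * α := by linarith
  have hz0 : (0 : ℝ) < (20 * α) ^ ((1 : ℝ) / 5) := Real.rpow_pos_of_pos h20 _
  have hγ0 : (0 : ℝ) < γ := lt_trans (mul_pos hC0 hz0) hγ
  have hr0 : (0 : ℝ) < r := lt_trans (div_pos (by norm_num) hγ0) hr
  have hγr : 5 < γ * r := by
    have := (div_lt_iff₀ hγ0).mp hr
    linarith
  have hγ5 : 20 * C ^ 5 * α < γ ^ 5 := by
    have h1 : (C * (20 * α) ^ ((1 : ℝ) / 5)) ^ (5 : ℕ) < γ ^ (5 : ℕ) :=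
      pow_lt_pow_left₀ hγ (by positivity) (by norm_num)
    have h2 : ((20 * α) ^ ((1 : ℝ) / 5)) ^ (5 : ℕ) = 20 * α := by
      rw [← Real.rpow_natCast ((20 * α) ^ ((1 : ℝ) / 5)) 5, ← Real.rpow_mul h20.le]
      norm_num
    have h3 : (C * (20 * α) ^ ((1 : ℝ) / 5)) ^ (5 : ℕ)
        = C ^ 5 * ((20 * α) ^ ((1 : ℝ) / 5)) ^ (5 : ℕ) := by rw [mul_pow]
    rw [h3, h2] at h1
    nlinarith
  have hN : (0 : ℝ) < n := by exact_mod_cast hn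
  set 𝒱 : Finset (Finset (Fin n ⊕ Fin n)) :=
    Finset.univ.filter (fun V : Finset (Fin n ⊕ Fin n) => (V.card : ℝ) ≤ α * n) with h𝒱
  -- covering step
  have cover : {ω | ¬ IsSparse n α (γ * r / n) (H ω)} ⊆
      ⋃ V ∈ 𝒱, ⋃ S ∈ (pairsIn n V).powersetCard (⌊(V.card : ℝ) * γ * r⌋₊ + 1),
        {ω | S ⊆ H ω} := by
    intro ω hω
    simp only [Set.mem_setOf_eq] at hω
    rw [IsSparse] at hω
    push_neg at hω
    obtain ⟨V, hVle, hVgt⟩ := hω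
    have heq : (V.card : ℝ) * (γ * r / n) * n = (V.card : ℝ) * γ * r := by
      field_simp
    rw [heq] at hVgt
    have hfloor : ⌊(V.card : ℝ) * γ * r⌋₊ + 1 ≤ (edgesWithin n (H ω) V).card := by
      have h0 : (0 : ℝ) ≤ (V.card : ℝ) * γ * r := by positivity
      have hlt : ⌊(V.card : ℝ) * γ * r⌋₊ < (edgesWithin n (H ω) V).card :=
        (Nat.floor_lt h0).mpr hVgt
      omega
    obtain ⟨S, hSsub, hScard⟩ := Finset.exists_subset_card_eq hfloor
    have hSpairs : S ⊆ pairsIn n V := by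
      intro e he
      have := hSsub he
      rw [edgesWithin, Finset.mem_filter] at this
      rw [pairsIn, Finset.mem_filter]
      exact ⟨Finset.mem_univ e, this.2⟩
    have hSH : S ⊆ H ω := fun e he => (Finset.mem_filter.mp (hSsub he)).1
    refine Set.mem_iUnion₂.mpr ⟨V, ?_, Set.mem_iUnion₂.mpr ⟨S, ?_, hSH⟩⟩
    · rw [h𝒱, Finset.mem_filter]
      exact ⟨Finset.mem_univ V, hVle⟩
    · rw [Finset.mem_powersetCard]
      exact ⟨hSpairs, hScard⟩
  -- union bound
  have hmeas : μ {ω | ¬ IsSparse n α (γ * r / n) (H ω)} ≤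
      ENNReal.ofReal (∑ V ∈ 𝒱,
        (((pairsIn n V).card.choose (⌊(V.card : ℝ) * γ * r⌋₊ + 1) : ℝ)
          * (C * r / n) ^ (⌊(V.card : ℝ) * γ * r⌋₊ + 1))) := by
    calc μ {ω | ¬ IsSparse n α (γ * r / n) (H ω)}
        ≤ μ (⋃ V ∈ 𝒱, ⋃ S ∈ (pairsIn n V).powersetCard (⌊(V.card : ℝ) * γ * r⌋₊ + 1),
            {ω | S ⊆ H ω}) := measure_mono cover
      _ ≤ ∑ V ∈ 𝒱, μ (⋃ S ∈ (pairsIn n V).powersetCard (⌊(V.card : ℝ) * γ * r⌋₊ + 1),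
            {ω | S ⊆ H ω}) := measure_biUnion_finset_le _ _
      _ ≤ ∑ V ∈ 𝒱, ∑ S ∈ (pairsIn n V).powersetCard (⌊(V.card : ℝ) * γ * r⌋₊ + 1),
            μ {ω | S ⊆ H ω} :=
          Finset.sum_le_sum fun V _ => measure_biUnion_finset_le _ _
      _ ≤ ∑ V ∈ 𝒱, ∑ S ∈ (pairsIn n V).powersetCard (⌊(V.card : ℝ) * γ * r⌋₊ + 1),
            ENNReal.ofReal ((C * r / n) ^ (⌊(V.card : ℝ) * γ * r⌋₊ + 1)) := by
          apply Finset.sum_le_sum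
          intro V _
          apply Finset.sum_le_sum
          intro S hS
          have hcard : S.card = ⌊(V.card : ℝ) * γ * r⌋₊ + 1 :=
            (Finset.mem_powersetCard.mp hS).2
          have := hspread S
          rw [hcard] at this
          exact this
      _ = ∑ V ∈ 𝒱, ENNReal.ofReal
            ((((pairsIn n V).card.choose (⌊(V.card : ℝ) * γ * r⌋₊ + 1) : ℝ))
              * (C * r / n) ^ (⌊(V.card : ℝ) * γ * r⌋₊ + 1)) := by
          apply Finset.sum_congr rfl
          intro V _
          rw [Finset.sum_const, Finset.card_powersetCard, nsmul_eq_mul,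
            ← ENNReal.ofReal_natCast, ← ENNReal.ofReal_mul (by positivity)]
      _ = ENNReal.ofReal (∑ V ∈ 𝒱,
            (((pairsIn n V).card.choose (⌊(V.card : ℝ) * γ * r⌋₊ + 1) : ℝ)
              * (C * r / n) ^ (⌊(V.card : ℝ) * γ * r⌋₊ + 1))) := by
          rw [ENNReal.ofReal_sum_of_nonneg]
          intro V _
          positivity
  refine lt_of_le_of_lt hmeas ?_
  rw [ENNReal.ofReal_lt_ofReal_iff (by positivity)]
  exact real_sum C α γ r n hn hC hα0 hα4 hγ0 hr0 hγ5 hγr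


end Paper
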